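/- For every w ∈ D_{∅,I₀} with w ≠ w_S w_{I₀}, there exists s ∈ S such that ℓ(sw) > ℓ(w) and s ∉ {w t w⁻¹ : t ∈ I₀}. -/

import Mathlib

open scoped Classical

namespace Okuyama

variable {B : Type} [Fintype B] [LinearOrder B]
variable {W : Type} [Group W] [Fintype W]
variable {M : CoxeterMatrix B}

/-- The standard parabolic subgroup `W_I` generated by the simple reflections in `I`. -/
def parab (cs : CoxeterSystem M W) (I : Set B) : Subgroup W :=
  Subgroup.closure (cs.simple '' I)

/-- The right coset `W_I · w`. -/
def rcoset (cs : CoxeterSystem M W) (I : Set B) (w : W) : Set W :=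
  {x | ∃ u ∈ parab cs I, x = u * w}

/-- `a` is a right coset of a standard parabolic subgroup. -/
def IsPCoset (cs : CoxeterSystem M W) (a : Set W) : Prop :=
  ∃ I : Set B, ∃ w : W, a = rcoset cs I w

/-- The set `D_{I,J}` of `(I,J)`-reduced elements. -/
def D (cs : CoxeterSystem M W) (I J : Set B) : Set W :=
  {w | ∀ u ∈ parab cs I, ∀ v ∈ parab cs J,
      cs.length (u * w * v) = cs.length u + cs.length w + cs.length v}

/-- `S(a) = S ∩ a·a⁻¹`, as a set of indices of simple reflections. -/
def Sof (cs : CoxeterSystem M W) (a : Set W) : Set B :=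
  {s | ∃ x ∈ a, ∃ y ∈ a, cs.simple s = x * y⁻¹}

/-- The degree `|S(a)|` of a coset. -/
noncomputable def deg (cs : CoxeterSystem M W) (a : Set W) : ℕ := (Sof cs a).ncard

/-- `ℓ(a) = min {ℓ(x) : x ∈ a}`. -/
noncomputable def lof (cs : CoxeterSystem M W) (a : Set W) : ℕ := sInf (cs.length '' a)

/-- `a ∪ J := W_{J ∪ S(a)} · a`. -/
def cupJ (cs : CoxeterSystem M W) (a : Set W) (J : Set B) : Set W :=
  {x | ∃ u ∈ parab cs (J ∪ Sof cs a), ∃ y ∈ a, x = u * y}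

/-- `a ∪ s := a ∪ {s}`. -/
def cup (cs : CoxeterSystem M W) (a : Set W) (s : B) : Set W := cupJ cs a {s}

/-- `n(I,s)`, the number of elements of `I` smaller than `s`. -/
noncomputable def nls (I : Set B) (s : B) : ℕ := {t ∈ I | t < s}.ncard

/-- The differential of the Coxeter complex, on the free abelian group on all
subsets of `W` (the Coxeter complex itself is the span of the cosets). -/
noncomputable def diff (cs : CoxeterSystem M W) : (Set W →₀ ℤ) →ₗ[ℤ] (Set W →₀ ℤ) :=
  Finsupp.lift _ ℤ _ fun a : Set W =>
    ∑ s : B, if s ∈ Sof cs a then 0 else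
      ((-1 : ℤ) ^ nls (Sof cs a) s) • Finsupp.single (cup cs a s) (1 : ℤ)

/-- `A(I₀)`: cosets meeting `D_{∅,I₀}`. -/
def AI (cs : CoxeterSystem M W) (I₀ : Set B) : Set (Set W) :=
  {a | IsPCoset cs a ∧ (a ∩ D cs ∅ I₀).Nonempty}

/-- `A(I₀)⁺`: elements of `A(I₀)` not contained in `W_{I₀}`. -/
def AIplus (cs : CoxeterSystem M W) (I₀ : Set B) : Set (Set W) :=
  {a | a ∈ AI cs I₀ ∧ ¬ a ⊆ (parab cs I₀ : Set W)}

/-- `I₀(a) = I₀ ∩ a⁻¹·a`. -/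
def I0of (cs : CoxeterSystem M W) (I₀ : Set B) (a : Set W) : Set B :=
  {s | s ∈ I₀ ∧ ∃ x ∈ a, ∃ y ∈ a, cs.simple s = x⁻¹ * y}

/-- The canonical ℤ-basis vectors attached to a set `P` of cosets. -/
def gens (P : Set (Set W)) : Set (Set W →₀ ℤ) :=
  {f | ∃ a ∈ P, f = Finsupp.single a 1}

/-- The canonical ℤ-basis vectors of degree `i` attached to a set `P` of cosets. -/
def gensDeg (cs : CoxeterSystem M W) (P : Set (Set W)) (i : ℕ) : Set (Set W →₀ ℤ) :=
  {f | ∃ a ∈ P, deg cs a = i ∧ f = Finsupp.single a 1}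

end Okuyama

open Okuyama

noncomputable section Ok4Aux

namespace Ok4Aux

open CoxeterSystem

variable {B : Type} {W : Type} [Group W] {M : CoxeterMatrix B}

/-- indicator function -/
def dd (c : W) : W → ZMod 2 := fun t => if t = c then 1 else 0

/-- conjugation automorphism of the additive group of `W → ZMod 2` -/
def conjAut (W : Type) [Group W] (w : W) : MulAut (Multiplicative (W → ZMod 2)) where
  toFun f := Multiplicative.ofAdd fun t => Multiplicative.toAdd f (w⁻¹ * t * w)
  invFun f := Multiplicative.ofAdd fun t => Multiplicative.toAdd f (w * t * w⁻¹)
  left_inv f := by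
    conv_rhs => rw [← ofAdd_toAdd f]
    simp only [toAdd_ofAdd]
    congr 1
    funext t
    congr 1
    group
  right_inv f := by
    conv_rhs => rw [← ofAdd_toAdd f]
    simp only [toAdd_ofAdd]
    congr 1
    funext t
    congr 1
    group
  map_mul' f g := rfl

/-- conjugation action as a homomorphism -/
def conjHom (W : Type) [Group W] : W →* MulAut (Multiplicative (W → ZMod 2)) where
  toFun := conjAut W
  map_one' := by
    apply MulEquiv.ext
    intro f
    show Multiplicative.ofAdd (fun t => Multiplicative.toAdd f ((1:W)⁻¹ * t * 1)) = f
    conv_rhs => rw [← ofAdd_toAdd f]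
    congr 1
    funext t
    simp
  map_mul' u v := by
    apply MulEquiv.ext
    intro f
    show Multiplicative.ofAdd (fun t => Multiplicative.toAdd f ((u*v)⁻¹ * t * (u*v)))
      = conjAut W u (conjAut W v f)
    show _ = Multiplicative.ofAdd
      (fun t => Multiplicative.toAdd (conjAut W v f) (u⁻¹ * t * u))
    simp only [conjAut, MulEquiv.coe_mk, Equiv.coe_fn_mk, toAdd_ofAdd]
    congr 1
    funext t
    congr 1
    group

theorem conjHom_dd (w c : W) :
    conjHom W w (Multiplicative.ofAdd (dd c)) = Multiplicative.ofAdd (dd (w * c * w⁻¹)) := by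
  show Multiplicative.ofAdd (fun t => dd c (w⁻¹ * t * w)) = _
  congr 1
  funext t
  simp only [dd]
  congr 1
  apply propext
  constructor
  · rintro h
    rw [show t = w * (w⁻¹ * t * w) * w⁻¹ by group, h]
  · rintro rfl
    group

/-- The group in which the reflection cocycle lives -/
abbrev GG (W : Type) [Group W] : Type := Multiplicative (W → ZMod 2) ⋊[conjHom W] W

variable (cs : CoxeterSystem M W)

/-- generators -/
def gen (i : B) : GG W := ⟨Multiplicative.ofAdd (dd (cs.simple i)), cs.simple i⟩

theorem si_mul_q_inv (i j : B) :
    cs.simple i * (cs.simple i * cs.simple j)⁻¹ = (cs.simple i * cs.simple j) * cs.simple i := by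
  rw [mul_inv_rev, cs.inv_simple, cs.inv_simple]
  group

theorem si_mul_q_inv_pow (i j : B) (n : ℕ) :
    cs.simple i * ((cs.simple i * cs.simple j)⁻¹) ^ n
      = (cs.simple i * cs.simple j) ^ n * cs.simple i := by
  induction n with
  | zero => simp
  | succ n ih =>
    rw [pow_succ', ← mul_assoc, si_mul_q_inv, mul_assoc, ih, ← mul_assoc, ← pow_succ']

theorem conj_pow_si (i j : B) (n : ℕ) :
    (cs.simple i * cs.simple j) ^ n * cs.simple i * ((cs.simple i * cs.simple j) ^ n)⁻¹
      = (cs.simple i * cs.simple j) ^ (2*n) * cs.simple i := by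
  rw [mul_assoc, ← inv_pow, si_mul_q_inv_pow, two_mul, pow_add]
  group


theorem conj_pow_qsi (i j : B) (n : ℕ) :
    (cs.simple i * cs.simple j) ^ n * (cs.simple i * cs.simple j * cs.simple i)
      * ((cs.simple i * cs.simple j) ^ n)⁻¹
      = (cs.simple i * cs.simple j) ^ (2*n+1) * cs.simple i := by
  have h := conj_pow_si cs i j n
  calc (cs.simple i * cs.simple j) ^ n * (cs.simple i * cs.simple j * cs.simple i)
      * ((cs.simple i * cs.simple j) ^ n)⁻¹
      = (cs.simple i * cs.simple j) *
        ((cs.simple i * cs.simple j) ^ n * cs.simple i * ((cs.simple i * cs.simple j) ^ n)⁻¹) := by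
        simp only [← mul_assoc]
        rw [mul_assoc ((cs.simple i * cs.simple j) ^ n) (cs.simple i) (cs.simple j),
          ← pow_succ, ← pow_succ']
    _ = (cs.simple i * cs.simple j) * ((cs.simple i * cs.simple j) ^ (2*n) * cs.simple i) := by
        rw [h]
    _ = (cs.simple i * cs.simple j) ^ (2*n+1) * cs.simple i := by
        rw [← mul_assoc, ← pow_succ']

theorem gen_pow (i j : B) (n : ℕ) :
    (gen cs i * gen cs j) ^ n =
      ⟨Multiplicative.ofAdd (∑ l ∈ Finset.range (2*n),
          dd ((cs.simple i * cs.simple j) ^ l * cs.simple i)),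
        (cs.simple i * cs.simple j) ^ n⟩ := by
  induction n with
  | zero =>
    ext
    · simp
    · simp
  | succ n ih =>
    rw [pow_succ, ih]
    have hmul : gen cs i * gen cs j =
        ⟨Multiplicative.ofAdd (dd (cs.simple i)
          + dd (cs.simple i * cs.simple j * (cs.simple i)⁻¹)), cs.simple i * cs.simple j⟩ := by
      rw [gen, gen, SemidirectProduct.mul_def]
      congr 1
      rw [conjHom_dd, ofAdd_add]
    rw [hmul, SemidirectProduct.mul_def]
    congr 1
    · show Multiplicative.ofAdd _ * conjHom W ((cs.simple i * cs.simple j) ^ n) _ = _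
      rw [show Multiplicative.ofAdd (dd (cs.simple i)
            + dd (cs.simple i * cs.simple j * (cs.simple i)⁻¹))
          = Multiplicative.ofAdd (dd (cs.simple i))
            * Multiplicative.ofAdd (dd (cs.simple i * cs.simple j * (cs.simple i)⁻¹)) from
          ofAdd_add _ _, map_mul, conjHom_dd, conjHom_dd, conj_pow_si,
          cs.inv_simple, conj_pow_qsi]
      rw [← ofAdd_add, ← ofAdd_add]
      congr 1
      have h2 : 2*(n+1) = (2*n) + 1 + 1 := by ring
      rw [h2, Finset.sum_range_succ, Finset.sum_range_succ]
      rw [add_assoc]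
    · rw [← pow_succ]

theorem gen_liftable : CoxeterMatrix.IsLiftable M (gen cs) := by
  intro i j
  rcases Nat.eq_zero_or_pos (M i j) with h0 | hpos
  · rw [h0, pow_zero]
  · rw [gen_pow]
    have hq : (cs.simple i * cs.simple j) ^ (M i j) = 1 := cs.simple_mul_simple_pow i j
    ext
    · show Multiplicative.ofAdd _ = 1
      have hsum : (∑ l ∈ Finset.range (2 * M i j),
          dd ((cs.simple i * cs.simple j) ^ l * cs.simple i)) = 0 := by
        rw [two_mul, ← Finset.sum_range_add_sum_Ico _ (Nat.le_add_right _ _),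
          Finset.sum_Ico_eq_sum_range]
        simp only [Nat.add_sub_cancel_left]
        have : ∀ l, dd ((cs.simple i * cs.simple j) ^ (M i j + l) * cs.simple i)
            = dd ((cs.simple i * cs.simple j) ^ l * cs.simple i) := by
          intro l
          rw [pow_add, hq, one_mul]
        rw [Finset.sum_congr rfl (fun l _ => this l), ← two_smul ℤ]
        funext t
        have : ∀ a : ZMod 2, (2:ℤ) • a = 0 := by decide
        rw [Pi.smul_apply, this, Pi.zero_apply]
      rw [hsum]
      rfl
    · show (cs.simple i * cs.simple j) ^ (M i j) = 1
      exact hq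

/-- The cocycle homomorphism. -/
def phi : W →* GG W := cs.lift ⟨gen cs, gen_liftable cs⟩

theorem phi_simple (i : B) : phi cs (cs.simple i) = gen cs i :=
  cs.lift_apply_simple (gen_liftable cs) i

theorem phi_right (w : W) : (phi cs w).right = w := by
  have h : (SemidirectProduct.rightHom.comp (phi cs) : W →* W) = MonoidHom.id W := by
    apply cs.ext_simple
    intro i
    simp [phi_simple, gen]
  exact DFunLike.congr_fun h w

/-- The reflection cocycle. -/
def NN (w : W) : W → ZMod 2 := Multiplicative.toAdd ((phi cs w).left)

theorem NN_mul (u v t : W) : NN cs (u * v) t = NN cs u t + NN cs v (u⁻¹ * t * u) := by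
  show Multiplicative.toAdd ((phi cs (u*v)).left) t = _
  rw [map_mul, SemidirectProduct.mul_left, phi_right]
  rfl

theorem NN_simple (i : B) (t : W) : NN cs (cs.simple i) t = dd (cs.simple i) t := by
  show Multiplicative.toAdd ((phi cs (cs.simple i)).left) t = _
  rw [phi_simple]
  rfl

theorem NN_one (t : W) : NN cs 1 t = 0 := by
  show Multiplicative.toAdd ((phi cs 1).left) t = 0
  rw [map_one]
  rfl

theorem NN_inv (u t : W) : NN cs u⁻¹ (u⁻¹ * t * u) = NN cs u t := by
  have h := NN_mul cs u u⁻¹ t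
  rw [mul_inv_cancel, NN_one] at h
  have : ∀ a b : ZMod 2, 0 = a + b → b = a := by decide
  exact this _ _ h


theorem NN_wordProd (ω : List B) (t : W) :
    NN cs (cs.wordProd ω) t
      = ((cs.leftInvSeq ω).map (fun c => if t = c then (1:ZMod 2) else 0)).sum := by
  induction ω generalizing t with
  | nil =>
    rw [cs.wordProd_nil]
    simp [NN_one]
  | cons i ω ih =>
    rw [cs.wordProd_cons]
    rw [NN_mul]
    have hlis : cs.leftInvSeq (i :: ω)
        = cs.simple i :: List.map (MulAut.conj (cs.simple i)) (cs.leftInvSeq ω) := rfl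
    rw [hlis, NN_simple, List.map_cons, List.sum_cons, List.map_map, ih]
    congr 1
    congr 1
    refine List.map_congr_left fun c _ => ?_
    show (if (cs.simple i)⁻¹ * t * cs.simple i = c then (1:ZMod 2) else 0)
      = (if t = cs.simple i * c * (cs.simple i)⁻¹ then (1:ZMod 2) else 0)
    congr 1
    apply propext
    constructor
    · rintro rfl
      group
    · rintro rfl
      group

theorem sum_ind_of_not_mem {l : List W} {t : W} (h : t ∉ l) :
    (l.map (fun c => if t = c then (1:ZMod 2) else 0)).sum = 0 := by
  induction l with
  | nil => simp
  | cons a l ih =>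
    simp only [List.mem_cons, not_or] at h
    rw [List.map_cons, List.sum_cons, if_neg h.1, ih h.2, add_zero]

theorem sum_ind_of_mem {l : List W} {t : W} (hn : l.Nodup) (h : t ∈ l) :
    (l.map (fun c => if t = c then (1:ZMod 2) else 0)).sum = 1 := by
  induction l with
  | nil => simp at h
  | cons a l ih =>
    rw [List.nodup_cons] at hn
    rw [List.map_cons, List.sum_cons]
    rcases List.mem_cons.mp h with rfl | hmem
    · rw [if_pos rfl, sum_ind_of_not_mem hn.1, add_zero]
    · have hne : t ≠ a := fun he => hn.1 (he ▸ hmem)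
      rw [if_neg hne, ih hn.2 hmem, zero_add]

theorem NN_eq_one_of_mem_lis {ω : List B} (hred : cs.IsReduced ω) {t : W}
    (h : t ∈ cs.leftInvSeq ω) : NN cs (cs.wordProd ω) t = 1 := by
  rw [NN_wordProd]
  exact sum_ind_of_mem hred.nodup_leftInvSeq h

theorem length_lt_of_NN_eq_one {w t : W} (h : NN cs w t = 1) :
    cs.length (t * w) < cs.length w := by
  obtain ⟨ω, hred, rfl⟩ := cs.exists_reduced_word' w
  have hmem : t ∈ cs.leftInvSeq ω := by
    by_contra hnot
    rw [NN_wordProd, sum_ind_of_not_mem hnot] at h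
    exact absurd h (by decide)
  exact (cs.isLeftInversion_of_mem_leftInvSeq hred hmem).2

theorem NN_eq_one_of_descent {w : W} {i : B}
    (h : cs.length (cs.simple i * w) < cs.length w) : NN cs w (cs.simple i) = 1 := by
  obtain ⟨υ, hred, hw⟩ := cs.exists_reduced_word' (cs.simple i * w)
  have hw' : w = cs.wordProd (i :: υ) := by
    rw [cs.wordProd_cons, ← hw, cs.simple_mul_simple_cancel_left]
  have hlen : cs.length (cs.simple i * w) + 1 = cs.length w := by
    rcases cs.length_simple_mul w i with h1 | h1
    · omega
    · exact h1
  have hred' : cs.IsReduced (i :: υ) := by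
    show cs.length (cs.wordProd (i :: υ)) = (i :: υ).length
    rw [← hw', List.length_cons, ← hred, ← hw]
    omega
  rw [hw']
  apply NN_eq_one_of_mem_lis cs hred'
  rw [show cs.leftInvSeq (i :: υ)
      = cs.simple i :: List.map (MulAut.conj (cs.simple i)) (cs.leftInvSeq υ) from rfl]
  exact List.mem_cons_self

theorem descent_iff {w : W} {i : B} :
    cs.length (cs.simple i * w) < cs.length w ↔ NN cs w (cs.simple i) = 1 :=
  ⟨NN_eq_one_of_descent cs, length_lt_of_NN_eq_one cs⟩

theorem NN_refl_self {t : W} (ht : cs.IsReflection t) : NN cs t t = 1 := by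
  obtain ⟨u, i, rfl⟩ := ht
  set t := u * cs.simple i * u⁻¹ with hts
  have h1 : t = u * (cs.simple i * u⁻¹) := by rw [hts]; group
  have h2 : NN cs t t = NN cs u t + NN cs (cs.simple i * u⁻¹) (u⁻¹ * t * u) := by
    rw [h1, ← NN_mul]
  have h3 : u⁻¹ * t * u = cs.simple i := by rw [hts]; group
  have h4 : NN cs (cs.simple i * u⁻¹) (cs.simple i)
      = NN cs (cs.simple i) (cs.simple i)
        + NN cs u⁻¹ ((cs.simple i)⁻¹ * cs.simple i * cs.simple i) := NN_mul cs _ _ _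
  have h5 : (cs.simple i)⁻¹ * cs.simple i * cs.simple i = cs.simple i := by group
  have h6 : NN cs u⁻¹ (cs.simple i) = NN cs u t := by
    rw [← h3, NN_inv]
  rw [h2, h3, h4, h5, h6, NN_simple, dd, if_pos rfl]
  have : ∀ a : ZMod 2, a + (1 + a) = 1 := by decide
  exact this _

theorem strong_exchange {w t : W} (ht : cs.IsReflection t)
    (h : cs.length (t * w) < cs.length w) : NN cs w t = 1 := by
  by_contra hne
  have h0 : NN cs w t = 0 := by
    have : ∀ a : ZMod 2, a ≠ 1 → a = 0 := by decide
    exact this _ hne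
  have hw : w = t * (t * w) := by rw [← mul_assoc, ht.mul_self, one_mul]
  have h1 := NN_mul cs t (t * w) t
  rw [← hw] at h1
  have h2 : t⁻¹ * t * t = t := by group
  rw [h2, NN_refl_self cs ht, h0] at h1
  have h3 : NN cs (t * w) t = 1 := by
    have : ∀ a : ZMod 2, (0:ZMod 2) = 1 + a → a = 1 := by decide
    exact this _ h1
  have h4 := length_lt_of_NN_eq_one cs h3
  rw [← hw] at h4
  omega

theorem prefix_lemma {x : W} (hx : ∀ i : B, cs.length (cs.simple i * x) < cs.length x) :
    ∀ v : W, cs.length v + cs.length (v⁻¹ * x) = cs.length x := by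
  suffices H : ∀ n : ℕ, ∀ v : W, cs.length v = n
      → cs.length v + cs.length (v⁻¹ * x) = cs.length x by
    exact fun v => H (cs.length v) v rfl
  intro n
  induction n using Nat.strong_induction_on with
  | _ n ih =>
    intro v hv
    rcases eq_or_ne v 1 with rfl | hne
    · simp
    obtain ⟨i, hdesc⟩ := cs.exists_leftDescent_of_ne_one hne
    obtain ⟨v', hvv⟩ : ∃ v', v = cs.simple i * v' :=
      ⟨cs.simple i * v, by rw [cs.simple_mul_simple_cancel_left]⟩
    have hsv : cs.simple i * v = v' := by rw [hvv, cs.simple_mul_simple_cancel_left]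
    have hdesc' : cs.length v' < cs.length v := by
      have : cs.length (cs.simple i * v) < cs.length v := hdesc
      rwa [hsv] at this
    have hlv' : cs.length v' + 1 = cs.length v := by
      rcases cs.length_simple_mul v i with h1 | h1
      · rw [hsv] at h1; omega
      · rw [hsv] at h1; exact h1
    have hIH : cs.length v' + cs.length (v'⁻¹ * x) = cs.length x :=
      ih (cs.length v') (by omega) v' rfl
    have hNx : NN cs x (cs.simple i) = 1 := (descent_iff cs).mp (hx i)
    have hNv' : NN cs v' (cs.simple i) = 0 := by
      have hnd : ¬ cs.length (cs.simple i * v') < cs.length v' := by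
        rw [← hvv]
        omega
      have := (descent_iff cs (w := v') (i := i)).mpr
      have h01 : ∀ a : ZMod 2, a = 0 ∨ a = 1 := by decide
      rcases h01 (NN cs v' (cs.simple i)) with h | h
      · exact h
      · exact absurd (this h) hnd
    have hco : NN cs x (cs.simple i)
        = NN cs v' (cs.simple i) + NN cs (v'⁻¹ * x) (v'⁻¹ * cs.simple i * v') := by
      conv_lhs => rw [show x = v' * (v'⁻¹ * x) by group]
      rw [NN_mul]
    have hNy : NN cs (v'⁻¹ * x) (v'⁻¹ * cs.simple i * v') = 1 := by
      rw [hNx, hNv', zero_add] at hco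
      exact hco.symm
    have hlt := length_lt_of_NN_eq_one cs hNy
    have heq : v'⁻¹ * cs.simple i * v' * (v'⁻¹ * x) = v⁻¹ * x := by
      rw [hvv, mul_inv_rev, cs.inv_simple]
      group
    rw [heq] at hlt
    have htri : cs.length x ≤ cs.length v + cs.length (v⁻¹ * x) := by
      have := cs.length_mul_le v (v⁻¹ * x)
      rw [mul_inv_cancel_left] at this
      exact this
    omega

theorem eq_of_all_descents {x wS : W} (hwS : ∀ v : W, cs.length v ≤ cs.length wS)
    (hx : ∀ i : B, cs.length (cs.simple i * x) < cs.length x) : x = wS := by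
  have h := prefix_lemma cs hx wS
  have h2 : cs.length x ≤ cs.length wS := hwS x
  have h3 : cs.length (wS⁻¹ * x) = 0 := by omega
  have h4 : wS⁻¹ * x = 1 := cs.length_eq_zero_iff.mp h3
  exact (inv_mul_eq_one.mp h4).symm

end Ok4Aux



/-- [Cabanes, On Okuyama's theorems about Alvis-Curtis
duality], proof of Proposition 3.  For every `w ∈ D_{∅,I₀}` with
`w ≠ w_S·w_{I₀}` there is a simple reflection `s` with `ℓ(sw) > ℓ(w)` and
`s ∉ w·I₀·w⁻¹`. -/
theorem okuyama_statement4
    {B : Type} [Fintype B] [LinearOrder B] {W : Type} [Group W] [Fintype W]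
    {M : CoxeterMatrix B} (cs : CoxeterSystem M W)
    (I₀ : Set B) (hI₀ : I₀ ≠ Set.univ)
    (wS : W) (hwS : ∀ v : W, cs.length v ≤ cs.length wS)
    (wI₀ : W) (hwI₀mem : wI₀ ∈ parab cs I₀)
    (hwI₀max : ∀ v ∈ parab cs I₀, cs.length v ≤ cs.length wI₀) :
    ∀ w ∈ D cs ∅ I₀, w ≠ wS * wI₀ →
      ∃ s : B, cs.length (cs.simple s * w) > cs.length w ∧
        ∀ t ∈ I₀, cs.simple s ≠ w * cs.simple t * w⁻¹ := by
  intro w hw hne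
  by_contra hcon
  push_neg at hcon
  have hw' := hw
  simp only [D, Set.mem_setOf_eq] at hw'
  have hD : ∀ v ∈ parab cs I₀, cs.length (w * v) = cs.length w + cs.length v := by
    intro v hv
    have := hw' 1 (Subgroup.one_mem _) v hv
    simpa using this
  have hsimp : ∀ t ∈ I₀, cs.simple t ∈ parab cs I₀ := fun t ht =>
    Subgroup.subset_closure (Set.mem_image_of_mem _ ht)
  have hxlen : cs.length (w * wI₀) = cs.length w + cs.length wI₀ := hD wI₀ hwI₀mem
  have hxdesc : ∀ i : B, cs.length (cs.simple i * (w * wI₀)) < cs.length (w * wI₀) := by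
    intro i
    by_cases hgt : cs.length (cs.simple i * w) > cs.length w
    · obtain ⟨t, ht, heq⟩ := hcon i hgt
      have hmem : cs.simple t * wI₀ ∈ parab cs I₀ := mul_mem (hsimp t ht) hwI₀mem
      have h1 : cs.length (cs.simple t * wI₀) ≤ cs.length wI₀ := hwI₀max _ hmem
      have h2 : cs.length (cs.simple t * wI₀) ≠ cs.length wI₀ := cs.length_simple_mul_ne wI₀ t
      have h3 : cs.length (w * (cs.simple t * wI₀))
          = cs.length w + cs.length (cs.simple t * wI₀) := hD _ hmem
      have h4 : cs.simple i * (w * wI₀) = w * (cs.simple t * wI₀) := by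
        rw [heq]; group
      rw [h4, h3, hxlen]
      omega
    · push_neg at hgt
      have hne' : cs.length (cs.simple i * w) ≠ cs.length w := cs.length_simple_mul_ne w i
      have h5 : cs.length (cs.simple i * (w * wI₀))
          ≤ cs.length (cs.simple i * w) + cs.length wI₀ := by
        have := cs.length_mul_le (cs.simple i * w) wI₀
        rwa [mul_assoc] at this
      rw [hxlen]
      omega
  have hxw : w * wI₀ = wS := Ok4Aux.eq_of_all_descents cs hwS hxdesc
  have hzlen : cs.length (w * wI₀⁻¹) = cs.length w + cs.length wI₀ := by
    rw [hD wI₀⁻¹ (inv_mem hwI₀mem), cs.length_inv]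
  have hzmax : cs.length (w * wI₀⁻¹) = cs.length wS := by
    rw [hzlen, ← hxlen, hxw]
  have hzdesc : ∀ i : B, cs.length (cs.simple i * (w * wI₀⁻¹)) < cs.length (w * wI₀⁻¹) := by
    intro i
    have h1 := cs.length_simple_mul_ne (w * wI₀⁻¹) i
    have h2 := hwS (cs.simple i * (w * wI₀⁻¹))
    omega
  have hzw : w * wI₀⁻¹ = wS := Ok4Aux.eq_of_all_descents cs hwS hzdesc
  have hinv : wI₀⁻¹ = wI₀ := mul_left_cancel (hzw.trans hxw.symm)
  have hsq : wI₀ * wI₀ = 1 := by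
    nth_rewrite 1 [← hinv]
    exact inv_mul_cancel wI₀
  apply hne
  conv_rhs => rw [← hxw]
  rw [mul_assoc, hsq, mul_one]
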